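/- (Lemma 4.5, gradient of Ψ.) In the polynomial ring R = 𝕜[x₀,x₁,x₂,b₀,b₁,c₀,c₁], the gradient ∇Ψ := (∂_{x₀}Ψ, ∂_{x₁}Ψ, ∂_{x₂}Ψ, ∂_{b₀}Ψ, ∂_{b₁}Ψ, ∂_{c₀}Ψ, ∂_{c₁}Ψ) satisfies ∇Ψ = D·∇L₁ − (−1)^d·π^p·𝓛·∇Δ − (−1)^d·π^p·E·Δ·∇L₀, where ∇L₁ = (c₁, −b₁, 0, 0, −x₁, 0, x₀), ∇Δ = (∂_{x₀}Δ, ∂_{x₁}Δ, 0, 0, 0, 0, 0), and ∇L₀ = (c₀, −b₀, 0, −x₁, 0, x₀, 0). -/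

import Mathlib

open MvPolynomial Finset

noncomputable section

variable (𝕜 : Type*) [Field 𝕜]

/-- `L₀ = c₀x₀ − b₀x₁` in `R = 𝕜[x₀,x₁,x₂,b₀,b₁,c₀,c₁]`, where the variables
`x₀,x₁,x₂,b₀,b₁,c₀,c₁` are `X 0, X 1, X 2, X 3, X 4, X 5, X 6` respectively. -/
def L0 : MvPolynomial (Fin 7) 𝕜 := X 5 * X 0 - X 3 * X 1

/-- `L₁ = c₁x₀ − b₁x₁`. -/
def L1 : MvPolynomial (Fin 7) 𝕜 := X 6 * X 0 - X 4 * X 1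

/-- `π = b₁c₀ − b₀c₁`. -/
def piPoly : MvPolynomial (Fin 7) 𝕜 := X 4 * X 5 - X 3 * X 6

/-- `Δ = σ(x₀,x₁) − x₂^p` where `σ(A,B) = ∑_{i=1}^{p-1} σ_i A^i B^{p-i}`. -/
def Delta (p : ℕ) (s : ℕ → 𝕜) : MvPolynomial (Fin 7) 𝕜 :=
  (∑ i ∈ Ioo 0 p, C (s i) * X 0 ^ i * X 1 ^ (p - i)) - X 2 ^ p

/-- `𝓛 = L₀^m + ∑_{k=1}^{m-1} e_k L₀^{m-k} L₁^k`. -/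
def calL (m : ℕ) (e : ℕ → 𝕜) : MvPolynomial (Fin 7) 𝕜 :=
  L0 𝕜 ^ m + ∑ k ∈ Ioo 0 m, C (e k) * L0 𝕜 ^ (m - k) * L1 𝕜 ^ k

/-- `Ψ = L₁^d − (−1)^d π^p Δ 𝓛` with `d = m + p`. -/
def Psi (p m : ℕ) (s e : ℕ → 𝕜) : MvPolynomial (Fin 7) 𝕜 :=
  L1 𝕜 ^ (m + p) - C ((-1 : 𝕜) ^ (m + p)) * piPoly 𝕜 ^ p * Delta 𝕜 p s * calL 𝕜 m e

/-- `D = d·L₁^{d-1} − (−1)^d π^p Δ·∑_{k=1}^{m-1} k e_k L₀^{m-k} L₁^{k-1}` with `d = m + p`. -/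
def Dpoly (p m : ℕ) (s e : ℕ → 𝕜) : MvPolynomial (Fin 7) 𝕜 :=
  C (((m + p : ℕ) : 𝕜)) * L1 𝕜 ^ (m + p - 1) -
    C ((-1 : 𝕜) ^ (m + p)) * piPoly 𝕜 ^ p * Delta 𝕜 p s *
      ∑ k ∈ Ioo 0 m, C ((k : 𝕜) * e k) * L0 𝕜 ^ (m - k) * L1 𝕜 ^ (k - 1)

/-- `E = m·L₀^{m-1} + ∑_{k=1}^{m-1} (m−k) e_k L₀^{m-k-1} L₁^k`. -/
def Epoly (m : ℕ) (e : ℕ → 𝕜) : MvPolynomial (Fin 7) 𝕜 :=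
  C ((m : 𝕜)) * L0 𝕜 ^ (m - 1) +
    ∑ k ∈ Ioo 0 m, C (((m - k : ℕ) : 𝕜) * e k) * L0 𝕜 ^ (m - k - 1) * L1 𝕜 ^ k


section AuxGradPsi

variable {𝕜}

private lemma pderiv_pow' (i : Fin 7) (f : MvPolynomial (Fin 7) 𝕜) (n : ℕ) :
    pderiv i (f ^ n) = C (n : 𝕜) * f ^ (n - 1) * pderiv i f := by
  simp [nsmul_eq_mul, smul_eq_mul, mul_assoc, mul_comm, mul_left_comm]

private lemma pderiv_pi_pow (p : ℕ) [CharP 𝕜 p] (i : Fin 7) :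
    pderiv i (piPoly 𝕜 ^ p) = 0 := by
  rw [pderiv_pow']
  simp [CharP.cast_eq_zero]

private lemma pderiv_calL (m : ℕ) (e : ℕ → 𝕜) (i : Fin 7) :
    pderiv i (calL 𝕜 m e) =
      Epoly 𝕜 m e * pderiv i (L0 𝕜) +
        (∑ k ∈ Ioo 0 m, C ((k : 𝕜) * e k) * L0 𝕜 ^ (m - k) * L1 𝕜 ^ (k - 1)) *
          pderiv i (L1 𝕜) := by
  have h1 : ∀ k ∈ Ioo 0 m, pderiv i (C (e k) * L0 𝕜 ^ (m - k) * L1 𝕜 ^ k) =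
      (C (((m - k : ℕ) : 𝕜) * e k) * L0 𝕜 ^ (m - k - 1) * L1 𝕜 ^ k) * pderiv i (L0 𝕜) +
        (C ((k : 𝕜) * e k) * L0 𝕜 ^ (m - k) * L1 𝕜 ^ (k - 1)) * pderiv i (L1 𝕜) := by
    intro k hk
    simp only [pderiv_mul, pderiv_pow', pderiv_C, zero_mul, mul_zero, zero_add, map_mul]
    ring
  rw [calL, map_add, map_sum, Finset.sum_congr rfl h1, Finset.sum_add_distrib,
    ← Finset.sum_mul, ← Finset.sum_mul, pderiv_pow', Epoly]
  ring

private theorem key_grad_Psi (p : ℕ) [CharP 𝕜 p] (m : ℕ) (s e : ℕ → 𝕜) (i : Fin 7) :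
    pderiv i (Psi 𝕜 p m s e) =
      Dpoly 𝕜 p m s e * pderiv i (L1 𝕜) -
        C ((-1 : 𝕜) ^ (m + p)) * piPoly 𝕜 ^ p * calL 𝕜 m e * pderiv i (Delta 𝕜 p s) -
        C ((-1 : 𝕜) ^ (m + p)) * piPoly 𝕜 ^ p * Epoly 𝕜 m e * Delta 𝕜 p s *
          pderiv i (L0 𝕜) := by
  rw [Psi, map_sub, pderiv_pow']
  simp only [pderiv_mul, pderiv_pi_pow, pderiv_C, pderiv_calL, zero_mul, mul_zero,
    add_zero, zero_add]
  rw [Dpoly]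
  ring

private lemma grad_L0 (i : Fin 7) :
    pderiv i (L0 𝕜) = ![X 5, -(X 3), 0, -(X 1), 0, X 0, 0] i := by
  fin_cases i <;> simp [L0, pderiv_X, Matrix.cons_val_succ] <;> rfl

private lemma grad_L1 (i : Fin 7) :
    pderiv i (L1 𝕜) = ![X 6, -(X 4), 0, 0, -(X 1), 0, X 0] i := by
  fin_cases i <;> simp [L1, pderiv_X, Matrix.cons_val_succ] <;> rfl

private lemma grad_Delta (p : ℕ) [CharP 𝕜 p] (s : ℕ → 𝕜) (i : Fin 7) :
    pderiv i (Delta 𝕜 p s) =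
      ![pderiv (0 : Fin 7) (Delta 𝕜 p s), pderiv (1 : Fin 7) (Delta 𝕜 p s),
        0, 0, 0, 0, 0] i := by
  fin_cases i <;>
    simp [Delta, pderiv_pow', pderiv_X, CharP.cast_eq_zero, Matrix.cons_val_succ] <;> rfl

end AuxGradPsi

/-- **Lemma 4.5, gradient of Ψ.**  In `R = 𝕜[x₀,x₁,x₂,b₀,b₁,c₀,c₁]`,
`∇Ψ = D·∇L₁ − (−1)^d·π^p·𝓛·∇Δ − (−1)^d·π^p·E·Δ·∇L₀`, where
`∇L₁ = (c₁, −b₁, 0, 0, −x₁, 0, x₀)`, `∇Δ = (∂_{x₀}Δ, ∂_{x₁}Δ, 0, 0, 0, 0, 0)`, and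
`∇L₀ = (c₀, −b₀, 0, −x₁, 0, x₀, 0)`. -/
theorem gradient_Psi
    (p : ℕ) (hp : p.Prime) [CharP 𝕜 p] (m : ℕ) (s e : ℕ → 𝕜) (i : Fin 7) :
    pderiv i (Psi 𝕜 p m s e) =
      Dpoly 𝕜 p m s e * ![X 6, -(X 4), 0, 0, -(X 1), 0, X 0] i -
        C ((-1 : 𝕜) ^ (m + p)) * piPoly 𝕜 ^ p * calL 𝕜 m e *
          ![pderiv (0 : Fin 7) (Delta 𝕜 p s), pderiv (1 : Fin 7) (Delta 𝕜 p s),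
            0, 0, 0, 0, 0] i -
        C ((-1 : 𝕜) ^ (m + p)) * piPoly 𝕜 ^ p * Epoly 𝕜 m e * Delta 𝕜 p s *
          ![X 5, -(X 3), 0, -(X 1), 0, X 0, 0] i := by
  rw [key_grad_Psi, grad_L0, grad_L1, grad_Delta]

end
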